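/- Let B = (b_{ij}) be an n×n skew-symmetrizable integer matrix with b_{ij} ≥ 0 whenever i < j, let A be its Cartan companion, and let S_i be the simple reflections of A acting on the weight lattice. For p ≥ 1 let k(p) := ⟨n − p + 1⟩ (so the sequence k(1), k(2), … is n, n−1, …, 1, n, n−1, …), and for p ≥ 0 set S'^{(p)} := S_{k(1)}∘⋯∘S_{k(p)}. Let R'_i(e_j) = e_j − a_{ji} e_i be the simple reflections of Aᵀ (the Cartan companion of −Bᵀ) acting on the root lattice, and assume that for every p ≥ 1 all coordinates of R'_{k(1)}∘⋯∘R'_{k(p−1)}(e_{k(p)}) are nonnegative. Define 2n×n integer matrices by N_0 := the block matrix with −Bᵀ on top of the n×n identity matrix and N_m := μ_{k(m)}(N_{m−1}) for m ≥ 1, and let C_m denote the bottom n×n submatrix of N_m. Then for every m ≥ 0, C_m is invertible over ℤ and the i-th column of (C_mᵀ)^{−1} equals: e_i if 0 ≤ m ≤ n and i ≤ n − m; −e_i if 0 ≤ m ≤ n and i > n − m; and −S'^{(m−n)}(e_i) if m > n (i.e., the g-vector ω_{i;t_{−m}} equals −c^{−∞}_{≤m−n} ω_i for m > n). -/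

import Mathlib

open Finset Matrix

/-- The simple reflection `s_i` of the Weyl group of `A` acting on the root lattice
in the basis of simple roots: `R_i(e_j) = e_j - a_{ij} e_i`. -/
def Rmap {n : ℕ} (A : Matrix (Fin n) (Fin n) ℤ) (i : Fin n) (v : Fin n → ℤ) : Fin n → ℤ :=
  v - (∑ j, A i j * v j) • Pi.single i (1 : ℤ)

/-- The simple reflection `s_i` acting on the weight lattice in the basis of
fundamental weights. -/
def Smap {n : ℕ} (A : Matrix (Fin n) (Fin n) ℤ) (i : Fin n) (v : Fin n → ℤ) : Fin n → ℤ :=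
  v - (v i) • (fun ℓ => A ℓ i)

/-- `⟨m⟩ ∈ {1, …, n}` (0-indexed as an element of `Fin n`): the unique element of
`{1, …, n}` congruent to `m` modulo `n`. -/
def idx (n : ℕ) (hn : 0 < n) (m : ℤ) : Fin n :=
  ⟨((m - 1) % (n : ℤ)).toNat, by
    have h0 : (0 : ℤ) < (n : ℤ) := Int.natCast_pos.mpr hn
    have h1 : 0 ≤ (m - 1) % (n : ℤ) := Int.emod_nonneg _ (ne_of_gt h0)
    have h2 : (m - 1) % (n : ℤ) < (n : ℤ) := Int.emod_lt_of_pos _ h0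
    omega⟩

/-- `k(p) = ⟨n − p + 1⟩`, so that `k(1), k(2), …` is `n, n−1, …, 1, n, n−1, …`. -/
def kfun (n : ℕ) (hn : 0 < n) (p : ℕ) : Fin n :=
  idx n hn ((n : ℤ) - (p : ℤ) + 1)

/-- `B` is skew-symmetrizable: `DB` is skew-symmetric for some diagonal `D` with
positive diagonal entries. -/
def IsSkewSymmetrizable {n : ℕ} (B : Matrix (Fin n) (Fin n) ℤ) : Prop :=
  ∃ d : Fin n → ℚ, (∀ i, 0 < d i) ∧ ∀ i j, d i * (B i j : ℚ) = -(d j * (B j i : ℚ))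

/-- The Cartan companion of `B`: `a_{ii} = 2`, `a_{ij} = −|b_{ij}|` for `i ≠ j`. -/
def cartanCompanion {n : ℕ} (B : Matrix (Fin n) (Fin n) ℤ) : Matrix (Fin n) (Fin n) ℤ :=
  Matrix.of fun i j => if i = j then 2 else -|B i j|

/-- Matrix mutation `μ_k` of a `2n×n` exchange matrix (rows `Sum.inl` form the
principal part; the row with the same index as column `k` is `Sum.inl k`). -/
def mutate {n : ℕ} (k : Fin n) (M : Matrix (Fin n ⊕ Fin n) (Fin n) ℤ) :
    Matrix (Fin n ⊕ Fin n) (Fin n) ℤ :=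
  Matrix.of fun i j =>
    if i = Sum.inl k ∨ j = k then -M i j
    else M i j + max (M i k) 0 * max (M (Sum.inl k) j) 0
        - max (-M i k) 0 * max (-M (Sum.inl k) j) 0

/-- The initial exchange matrix with principal coefficients: `B` on top of the
identity matrix. -/
def initialM {n : ℕ} (B : Matrix (Fin n) (Fin n) ℤ) : Matrix (Fin n ⊕ Fin n) (Fin n) ℤ :=
  Matrix.of fun i j => Sum.elim (fun r => B r j) (fun r => if r = j then 1 else 0) i

/-- `N_m`: iterated mutation of the principal-coefficients exchange matrix along the
sequence of directions `k(1), k(2), …` (i.e. `n, n−1, …, 1, n, n−1, …`). -/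
def Nseq {n : ℕ} (hn : 0 < n) (B : Matrix (Fin n) (Fin n) ℤ) :
    ℕ → Matrix (Fin n ⊕ Fin n) (Fin n) ℤ
  | 0 => initialM B
  | m + 1 => mutate (kfun n hn (m + 1)) (Nseq hn B m)

/-- `R'^{(p)} = R_{k(1)}∘⋯∘R_{k(p)}` on the root lattice. -/
def Rseq' {n : ℕ} (hn : 0 < n) (A : Matrix (Fin n) (Fin n) ℤ) (p : ℕ) (v : Fin n → ℤ) :
    Fin n → ℤ :=
  (List.range p).foldr (fun t w => Rmap A (kfun n hn (t + 1)) w) v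

/-- `S'^{(p)} = S_{k(1)}∘⋯∘S_{k(p)}` on the weight lattice. -/
def Sseq' {n : ℕ} (hn : 0 < n) (A : Matrix (Fin n) (Fin n) ℤ) (p : ℕ) (v : Fin n → ℤ) :
    Fin n → ℤ :=
  (List.range p).foldr (fun t w => Smap A (kfun n hn (t + 1)) w) v

namespace Stmt11

variable {n : ℕ}

lemma rmap_apply (A : Matrix (Fin n) (Fin n) ℤ) (i : Fin n) (v : Fin n → ℤ) (r : Fin n) :
    Rmap A i v r = v r - (∑ j, A i j * v j) * (if r = i then 1 else 0) := by
  simp [Rmap, Pi.single_apply]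

lemma smap_apply (A : Matrix (Fin n) (Fin n) ℤ) (i : Fin n) (v : Fin n → ℤ) (r : Fin n) :
    Smap A i v r = v r - v i * A r i := by
  simp [Smap]

lemma Rmap_add (A : Matrix (Fin n) (Fin n) ℤ) (i : Fin n) (u v : Fin n → ℤ) :
    Rmap A i (u + v) = Rmap A i u + Rmap A i v := by
  funext r
  simp only [rmap_apply, Pi.add_apply, mul_add, Finset.sum_add_distrib]
  ring

lemma Rmap_smul (A : Matrix (Fin n) (Fin n) ℤ) (i : Fin n) (c : ℤ) (v : Fin n → ℤ) :
    Rmap A i (c • v) = c • Rmap A i v := by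
  funext r
  simp only [rmap_apply, Pi.smul_apply, smul_eq_mul]
  have : ∑ j, A i j * (c * v j) = c * ∑ j, A i j * v j := by
    rw [Finset.mul_sum]; exact Finset.sum_congr rfl fun j _ => by ring
  rw [this]; ring

lemma Rseq'_succ (hn : 0 < n) (A : Matrix (Fin n) (Fin n) ℤ) (p : ℕ) (v : Fin n → ℤ) :
    Rseq' hn A (p + 1) v = Rseq' hn A p (Rmap A (kfun n hn (p + 1)) v) := by
  unfold Rseq'
  rw [List.range_succ, List.foldr_append]
  simp

lemma Sseq'_succ (hn : 0 < n) (A : Matrix (Fin n) (Fin n) ℤ) (p : ℕ) (v : Fin n → ℤ) :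
    Sseq' hn A (p + 1) v = Sseq' hn A p (Smap A (kfun n hn (p + 1)) v) := by
  unfold Sseq'
  rw [List.range_succ, List.foldr_append]
  simp

lemma Rseq'_zero (hn : 0 < n) (A : Matrix (Fin n) (Fin n) ℤ) (v : Fin n → ℤ) :
    Rseq' hn A 0 v = v := rfl

lemma Rseq'_add (hn : 0 < n) (A : Matrix (Fin n) (Fin n) ℤ) (p : ℕ) (u v : Fin n → ℤ) :
    Rseq' hn A p (u + v) = Rseq' hn A p u + Rseq' hn A p v := by
  induction p generalizing u v with
  | zero => rfl
  | succ p ih => rw [Rseq'_succ, Rseq'_succ, Rseq'_succ, Rmap_add, ih]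

lemma Rseq'_smul (hn : 0 < n) (A : Matrix (Fin n) (Fin n) ℤ) (p : ℕ) (c : ℤ) (v : Fin n → ℤ) :
    Rseq' hn A p (c • v) = c • Rseq' hn A p v := by
  induction p generalizing v with
  | zero => rfl
  | succ p ih => rw [Rseq'_succ, Rseq'_succ, Rmap_smul, ih]

lemma Rseq'_neg (hn : 0 < n) (A : Matrix (Fin n) (Fin n) ℤ) (p : ℕ) (v : Fin n → ℤ) :
    Rseq' hn A p (-v) = -Rseq' hn A p v := by
  have := Rseq'_smul hn A p (-1) v
  simpa using this

end Stmt11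
namespace Stmt11

variable {n : ℕ}

lemma sub_n_emod (x : ℤ) (n : ℕ) : (x - n) % n = x % n := by
  conv_rhs => rw [← Int.emod_emod_of_dvd x (dvd_refl (n : ℤ))]
  rw [Int.sub_emod, Int.emod_self, sub_zero, Int.emod_emod_of_dvd _ (dvd_refl (n : ℤ))]

lemma kfun_add_n (hn : 0 < n) (p : ℕ) : kfun n hn (p + n) = kfun n hn p := by
  unfold kfun idx
  apply Fin.ext
  show ((((n : ℤ) - ((p + n : ℕ) : ℤ) + 1) - 1) % (n : ℤ)).toNat
      = ((((n : ℤ) - (p : ℤ) + 1) - 1) % (n : ℤ)).toNat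
  have h : ((n : ℤ) - ((p + n : ℕ) : ℤ) + 1) - 1 = (((n : ℤ) - (p : ℤ) + 1) - 1) - n := by
    push_cast; ring
  rw [h, sub_n_emod]

lemma kfun_val (hn : 0 < n) (m : ℕ) : ((kfun n hn (m + 1)) : ℕ) = n - 1 - m % n := by
  unfold kfun idx
  show ((((n : ℤ) - ((m + 1 : ℕ) : ℤ) + 1) - 1) % (n : ℤ)).toNat = n - 1 - m % n
  have hq : m % n < n := Nat.mod_lt _ hn
  have hm : (m : ℤ) = (n : ℤ) * ((m / n : ℕ) : ℤ) + ((m % n : ℕ) : ℤ) := by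
    exact_mod_cast (Nat.div_add_mod m n).symm
  have e1 : ((n : ℤ) - ((m + 1 : ℕ) : ℤ) + 1) - 1 =
      ((n : ℤ) - ((m % n : ℕ) : ℤ) - 1) + (n : ℤ) * (-((m / n : ℕ) : ℤ)) := by
    have h2 : ((m + 1 : ℕ) : ℤ) = (m : ℤ) + 1 := by push_cast; ring
    rw [h2, hm]; ring
  rw [e1, Int.add_mul_emod_self_left, Int.emod_eq_of_lt (by omega) (by omega)]
  omega

lemma mod_succ (hn : 0 < n) (m : ℕ) :
    (m + 1) % n = if m % n = n - 1 then 0 else m % n + 1 := by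
  rcases eq_or_lt_of_le (show 1 ≤ n from hn) with h1 | h2
  · simp [← h1, Nat.mod_one]
  · have h1n : 1 % n = 1 := Nat.mod_eq_of_lt h2
    have hq : m % n < n := Nat.mod_lt _ hn
    rw [Nat.add_mod, h1n]
    split
    · next h => rw [h, Nat.sub_add_cancel (by omega), Nat.mod_self]
    · next h => exact Nat.mod_eq_of_lt (by omega)

lemma pair_step (A : Matrix (Fin n) (Fin n) ℤ) (k : Fin n) (hA : A k k = 2)
    (u v : Fin n → ℤ) :
    ∑ r, Rmap Aᵀ k u r * Smap A k v r = ∑ r, u r * v r := by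
  set c := ∑ j, A j k * u j with hc
  have key : ∀ r, Rmap Aᵀ k u r * Smap A k v r
      = (u r * v r - v k * (A r k * u r)) - (if r = k then c * v k - c * (v k * A k k) else 0) := by
    intro r
    rw [rmap_apply, smap_apply]
    by_cases h : r = k
    · subst h
      simp only [eq_self_iff_true, if_true, Matrix.transpose_apply, ← hc]
      ring
    · simp only [if_neg h]; ring
  rw [Finset.sum_congr rfl fun r _ => key r, Finset.sum_sub_distrib, Finset.sum_sub_distrib,
    Finset.sum_ite_eq' Finset.univ k (fun _ => c * v k - c * (v k * A k k))]
  simp only [Finset.mem_univ, if_pos, hA]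
  rw [← Finset.mul_sum]
  have h2 : ∑ r, A r k * u r = c := by rw [hc]
  rw [h2]; ring

lemma pair_seq (hn : 0 < n) (A : Matrix (Fin n) (Fin n) ℤ) (hA : ∀ k, A k k = 2) (p : ℕ) :
    ∀ u v : Fin n → ℤ, ∑ r, Rseq' hn Aᵀ p u r * Sseq' hn A p v r = ∑ r, u r * v r := by
  induction p with
  | zero => intro u v; rfl
  | succ p ih =>
    intro u v
    rw [Rseq'_succ, Sseq'_succ, ih, pair_step A _ (hA _)]

end Stmt11
namespace Stmt11

variable {n : ℕ}

lemma sum_mul_single (f : Fin n → ℤ) (k : Fin n) :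
    ∑ j, f j * (Pi.single k (1 : ℤ) : Fin n → ℤ) j = f k := by
  simp [Pi.single_apply]

lemma Rmap_single (A : Matrix (Fin n) (Fin n) ℤ) (k j : Fin n) :
    Rmap A k (Pi.single j (1 : ℤ)) = Pi.single j (1 : ℤ) + (-(A k j)) • Pi.single k (1 : ℤ) := by
  unfold Rmap
  rw [sum_mul_single (A k) j]
  funext x
  simp only [Pi.sub_apply, Pi.add_apply, Pi.smul_apply, smul_eq_mul]
  ring

/-- sign of row/column `i` in the principal part of `N_m`. -/
def sgn (n m : ℕ) (i : Fin n) : ℤ := if n ≤ (i : ℕ) + m % n then -1 else 1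

/-- the `(r, i)` entry of the coefficient part `C_m` of `N_m`. -/
def Cfun (n : ℕ) (hn : 0 < n) (B : Matrix (Fin n) (Fin n) ℤ) (m : ℕ) (i r : Fin n) : ℤ :=
  if m < n then
    (if (i : ℕ) + 1 ≤ n - m then (Pi.single i (1 : ℤ) : Fin n → ℤ) r
     else -(Pi.single i (1 : ℤ) : Fin n → ℤ) r)
  else -(Rseq' hn (cartanCompanion B)ᵀ (m - n) (Pi.single i (1 : ℤ)) r)

end Stmt11
namespace Stmt11

variable {n : ℕ}

lemma main (hn : 0 < n) (B : Matrix (Fin n) (Fin n) ℤ)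
    (hB0 : ∀ j, B j j = 0)
    (hpos : ∀ i j : Fin n, i < j → 0 ≤ B i j)
    (hneg : ∀ i j : Fin n, i < j → B j i ≤ 0)
    (hred : ∀ p : ℕ, 1 ≤ p → ∀ r : Fin n,
      0 ≤ Rseq' hn (cartanCompanion B)ᵀ (p - 1) (Pi.single (kfun n hn p) (1 : ℤ)) r) :
    ∀ m : ℕ,
      (∀ i j : Fin n, Nseq hn (-Bᵀ) m (Sum.inl i) j = sgn n m i * sgn n m j * (-(B j i)))
      ∧ (∀ r i : Fin n, Nseq hn (-Bᵀ) m (Sum.inr r) i = Cfun n hn B m i r) := by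
  intro m
  induction m with
  | zero =>
    constructor
    · intro i j
      have hi : (i : ℕ) < n := i.isLt
      show initialM (-Bᵀ) (Sum.inl i) j = _
      unfold sgn
      rw [Nat.zero_mod, add_zero, if_neg (by omega), if_neg (by have := j.isLt; omega)]
      simp [initialM]
    · intro r i
      have hi : (i : ℕ) < n := i.isLt
      show initialM (-Bᵀ) (Sum.inr r) i = _
      unfold Cfun
      rw [if_pos hn, if_pos (by omega)]
      simp [initialM, Pi.single_apply]
  | succ m IH =>
    obtain ⟨IH1, IH2⟩ := IH
    have hNs : Nseq hn (-Bᵀ) (m + 1) = mutate (kfun n hn (m + 1)) (Nseq hn (-Bᵀ) m) := rfl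
    set k := kfun n hn (m + 1) with hkdef
    have hq : m % n < n := Nat.mod_lt _ hn
    have hkval : (k : ℕ) = n - 1 - m % n := kfun_val hn m
    have hsgnk : sgn n m k = 1 := by unfold sgn; rw [if_neg (by omega)]
    have hlt : ∀ i : Fin n, ¬ n ≤ (i : ℕ) + m % n → i ≠ k → i < k := by
      intro i h1 h2
      have h3 : (i : ℕ) ≠ (k : ℕ) := fun hc => h2 (Fin.ext hc)
      exact Fin.lt_def.mpr (by omega)
    have hgt : ∀ i : Fin n, n ≤ (i : ℕ) + m % n → k < i := by
      intro i h1
      have hi : (i : ℕ) < n := i.isLt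
      exact Fin.lt_def.mpr (by omega)
    have hcol : ∀ i : Fin n, 0 ≤ sgn n m i * sgn n m k * (-(B k i)) := by
      intro i
      rw [hsgnk, mul_one]
      by_cases h2 : i = k
      · subst h2; simp [hB0]
      unfold sgn
      by_cases h1 : n ≤ (i : ℕ) + m % n
      · rw [if_pos h1]
        have := hpos k i (hgt i h1)
        linarith
      · rw [if_neg h1]
        have := hneg i k (hlt i h1 h2)
        linarith
    have hrow : ∀ j : Fin n, sgn n m k * sgn n m j * (-(B j k)) ≤ 0 := by
      intro j
      rw [hsgnk, one_mul]
      by_cases h2 : j = k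
      · subst h2; simp [hB0]
      unfold sgn
      by_cases h1 : n ≤ (j : ℕ) + m % n
      · rw [if_pos h1]
        have := hneg k j (hgt j h1)
        linarith
      · rw [if_neg h1]
        have := hpos j k (hlt j h1 h2)
        linarith
    have habs : ∀ j : Fin n, j ≠ k → -(sgn n m k * sgn n m j * (-(B j k))) = |B j k| := by
      intro j h2
      rw [hsgnk, one_mul]
      unfold sgn
      by_cases h1 : n ≤ (j : ℕ) + m % n
      · rw [if_pos h1]
        rw [abs_of_nonpos (hneg k j (hgt j h1))]
        ring
      · rw [if_neg h1]
        rw [abs_of_nonneg (hpos j k (hlt j h1 h2))]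
        ring
    have hsgn1 : ∀ i : Fin n, sgn n (m + 1) i
        = (if m % n = n - 1 then (-1 : ℤ) else 1) * (sgn n m i * (if i = k then -1 else 1)) := by
      intro i
      have hi : (i : ℕ) < n := i.isLt
      have hik : (i = k) ↔ ((i : ℕ) = n - 1 - m % n) := by
        constructor
        · intro h; rw [h, hkval]
        · intro h; exact Fin.ext (by rw [hkval, ← h])
      unfold sgn
      rw [mod_succ hn]
      by_cases h1 : m % n = n - 1 <;> by_cases h2 : i = k <;>
        rw [hik] at h2 <;>
        simp only [h1, if_pos, if_neg, hik, if_true, if_false, eq_self_iff_true] <;>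
        split_ifs <;> first | rfl | omega | norm_num
    have hsgn2 : ∀ i j : Fin n, sgn n (m + 1) i * sgn n (m + 1) j
        = (sgn n m i * sgn n m j) * ((if i = k then (-1 : ℤ) else 1) * (if j = k then -1 else 1)) := by
      intro i j
      rw [hsgn1 i, hsgn1 j]
      by_cases h : m % n = n - 1 <;> simp only [h, if_true, if_false, eq_self_iff_true, if_pos, if_neg] <;>
        split_ifs <;> ring
    constructor
    · -- principal part
      intro i j
      rw [hNs]
      simp only [mutate, Matrix.of_apply]
      by_cases hik : i = k <;> by_cases hjk : j = k
      · subst hik; subst hjk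
        rw [if_pos (Or.inl rfl), IH1, hB0]
        rw [hsgn2]
        simp
      · subst hik
        rw [if_pos (Or.inl rfl), IH1, hsgn2 k j]
        rw [if_pos rfl, if_neg hjk]
        ring
      · subst hjk
        rw [if_pos (Or.inr rfl), IH1, hsgn2 i k]
        rw [if_neg hik, if_pos rfl]
        ring
      · rw [if_neg (by simp [hik, hjk])]
        simp only [IH1]
        rw [max_eq_right (hrow j), max_eq_right (neg_nonpos.mpr (hcol i))]
        rw [hsgn2 i j, if_neg hik, if_neg hjk]
        ring
    · -- coefficient part
      intro r j
      rw [hNs]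
      simp only [mutate, Matrix.of_apply]
      simp only [show ((Sum.inr r : Fin n ⊕ Fin n) = Sum.inl k) ↔ False from by simp, false_or]
      by_cases hjk : j = k
      · subst hjk
        rw [if_pos rfl, IH2]
        by_cases hmn : m < n
        · have hmm : m % n = m := Nat.mod_eq_of_lt hmn
          by_cases hmn1 : m + 1 < n
          · unfold Cfun
            rw [if_pos hmn, if_pos hmn1, if_pos (by omega), if_neg (by omega)]
          · unfold Cfun
            rw [if_pos hmn, if_neg hmn1, show m + 1 - n = 0 from by omega, Rseq'_zero,
              if_pos (by omega)]
        · unfold Cfun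
          rw [if_neg hmn, if_neg (by omega), show m + 1 - n = (m - n) + 1 from by omega,
            Rseq'_succ]
          have hk2 : kfun n hn (m - n + 1) = k := by
            rw [hkdef, show m + 1 = (m - n + 1) + n from by omega, kfun_add_n]
          rw [hk2, Rmap_single]
          have hAkk : cartanCompanion Bᵀ k k = (2 : ℤ) := by simp [cartanCompanion]
          have h2 : (Pi.single k (1 : ℤ) : Fin n → ℤ) + (-((cartanCompanion B)ᵀ k k)) • Pi.single k (1 : ℤ)
              = -(Pi.single k (1 : ℤ)) := by
            funext x
            simp only [Pi.add_apply, Pi.smul_apply, Pi.neg_apply, smul_eq_mul,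
              Matrix.transpose_apply]
            rw [show cartanCompanion B k k = (2 : ℤ) from by simp [cartanCompanion]]
            ring
          rw [h2, Rseq'_neg]
          simp
      · rw [if_neg hjk]
        simp only [IH1, IH2]
        rw [max_eq_right (hrow j)]
        rw [mul_zero, add_zero]
        by_cases hmn : m < n
        · have hmm : m % n = m := Nat.mod_eq_of_lt hmn
          have hCk : Cfun n hn B m k r = (Pi.single k (1 : ℤ) : Fin n → ℤ) r := by
            unfold Cfun
            rw [if_pos hmn, if_pos (by omega)]
          rw [hCk, max_eq_right (by rw [Pi.single_apply]; split <;> norm_num), zero_mul, sub_zero]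
          have hjv : (j : ℕ) ≠ (k : ℕ) := fun hc => hjk (Fin.ext hc)
          have hjlt : (j : ℕ) < n := j.isLt
          by_cases hmn1 : m + 1 < n
          · unfold Cfun
            rw [if_pos hmn, if_pos hmn1]
            exact if_congr (by omega) rfl rfl
          · unfold Cfun
            rw [if_pos hmn, if_neg hmn1, show m + 1 - n = 0 from by omega, Rseq'_zero,
              if_neg (by omega)]
        · -- n ≤ m
          have hk2 : kfun n hn (m - n + 1) = k := by
            rw [hkdef, show m + 1 = (m - n + 1) + n from by omega, kfun_add_n]
          have hpos' : ∀ x, 0 ≤ Rseq' hn (cartanCompanion B)ᵀ (m - n) (Pi.single k (1 : ℤ)) x := by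
            intro x
            have := hred (m - n + 1) (by omega) x
            rwa [Nat.add_sub_cancel, hk2] at this
          have hCk : Cfun n hn B m k r
              = -(Rseq' hn (cartanCompanion B)ᵀ (m - n) (Pi.single k (1 : ℤ)) r) := by
            unfold Cfun
            rw [if_neg hmn]
          rw [hCk, neg_neg, max_eq_left (hpos' r), habs j hjk, max_eq_left (abs_nonneg (B j k))]
          unfold Cfun
          rw [if_neg hmn, if_neg (by omega), show m + 1 - n = (m - n) + 1 from by omega,
            Rseq'_succ, hk2, Rmap_single]
          have hAjk : (cartanCompanion B)ᵀ k j = -|B j k| := by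
            simp [cartanCompanion, Matrix.transpose_apply, hjk]
          rw [hAjk, neg_neg]
          rw [show (|B j k| : ℤ) • (Pi.single k (1:ℤ) : Fin n → ℤ)
                = |B j k| • (Pi.single k (1:ℤ) : Fin n → ℤ) from rfl]
          rw [Rseq'_add, Rseq'_smul]
          simp only [Pi.add_apply, Pi.smul_apply, smul_eq_mul]
          ring

end Stmt11

/-- The c-vector matrices `C_m = C^{−Bᵀ}_{t_{−m}}` are invertible over `ℤ` and the
`i`-th column of `(C_mᵀ)^{−1}` is `e_i` (resp. `−e_i`) if `m ≤ n` and `i ≤ n−m`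
(resp. `i > n−m`), and `−S'^{(m−n)}(e_i)` if `m > n`; i.e. the g-vector
`ω_{i;t_{−m}}` equals `−c^{−∞}_{≤m−n} ω_i` for `m > n`. -/
theorem statement11 (n : ℕ) (hn : 0 < n) (B : Matrix (Fin n) (Fin n) ℤ)
    (hskew : IsSkewSymmetrizable B)
    (hacyclic : ∀ i j : Fin n, i < j → 0 ≤ B i j)
    (hred : ∀ p : ℕ, 1 ≤ p → ∀ r : Fin n,
      0 ≤ Rseq' hn (cartanCompanion B)ᵀ (p - 1) (Pi.single (kfun n hn p) (1 : ℤ)) r) :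
    ∀ m : ℕ,
      (Matrix.of fun r i : Fin n => Nseq hn (-Bᵀ) m (Sum.inr r) i)ᵀ *
          (Matrix.of fun r i : Fin n =>
            if m ≤ n then
              (if (i : ℕ) + 1 ≤ n - m then (Pi.single i (1 : ℤ) : Fin n → ℤ) r
               else -(Pi.single i (1 : ℤ) : Fin n → ℤ) r)
            else -Sseq' hn (cartanCompanion B) (m - n) (Pi.single i (1 : ℤ)) r) = 1 ∧
      (Matrix.of fun r i : Fin n =>
            if m ≤ n then
              (if (i : ℕ) + 1 ≤ n - m then (Pi.single i (1 : ℤ) : Fin n → ℤ) r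
               else -(Pi.single i (1 : ℤ) : Fin n → ℤ) r)
            else -Sseq' hn (cartanCompanion B) (m - n) (Pi.single i (1 : ℤ)) r) *
          (Matrix.of fun r i : Fin n => Nseq hn (-Bᵀ) m (Sum.inr r) i)ᵀ = 1 := by
  obtain ⟨d, hd, hsk⟩ := hskew
  have hB0 : ∀ j, B j j = 0 := by
    intro j
    have h := hsk j j
    have hdj := hd j
    have h2 : (B j j : ℚ) = 0 := by nlinarith
    exact_mod_cast h2
  have hneg : ∀ i j : Fin n, i < j → B j i ≤ 0 := by
    intro i j hij
    have h := hsk i j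
    have h2 : (0 : ℚ) ≤ (B i j : ℚ) := by exact_mod_cast hacyclic i j hij
    have hdi := hd i
    have hdj := hd j
    have h3 : (B j i : ℚ) ≤ 0 := by nlinarith
    exact_mod_cast h3
  have hmain := Stmt11.main hn B hB0 hacyclic hneg hred
  have hAdiag : ∀ k : Fin n, cartanCompanion B k k = 2 := fun k => by simp [cartanCompanion]
  intro m
  by_cases hmn : m ≤ n
  · -- small m : both factors are the same diagonal matrix
    set dvec : Fin n → ℤ := fun i => if (i : ℕ) + 1 ≤ n - m then 1 else -1 with hdv
    have hdiag : ∀ r i : Fin n,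
        (if (i : ℕ) + 1 ≤ n - m then (Pi.single i (1 : ℤ) : Fin n → ℤ) r
         else -(Pi.single i (1 : ℤ) : Fin n → ℤ) r) = Matrix.diagonal dvec r i := by
      intro r i
      rw [Matrix.diagonal_apply]
      by_cases hri : r = i
      · subst hri
        by_cases h : (r : ℕ) + 1 ≤ n - m <;> simp [hdv, h] <;> omega
      · by_cases h : (i : ℕ) + 1 ≤ n - m <;>
          simp [hdv, h, hri, Pi.single_eq_of_ne hri]
    have hC : (Matrix.of fun r i : Fin n => Nseq hn (-Bᵀ) m (Sum.inr r) i)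
        = Matrix.diagonal dvec := by
      ext r i
      rw [Matrix.of_apply, (hmain m).2 r i]
      unfold Stmt11.Cfun
      by_cases hmn' : m < n
      · rw [if_pos hmn']
        exact hdiag r i
      · have hmeq : m = n := by omega
        rw [if_neg hmn', show m - n = 0 from by omega, Stmt11.Rseq'_zero, ← hdiag r i,
          if_neg (by omega)]
    have hG : (Matrix.of fun r i : Fin n =>
        if m ≤ n then
          (if (i : ℕ) + 1 ≤ n - m then (Pi.single i (1 : ℤ) : Fin n → ℤ) r
           else -(Pi.single i (1 : ℤ) : Fin n → ℤ) r)
        else -Sseq' hn (cartanCompanion B) (m - n) (Pi.single i (1 : ℤ)) r)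
        = Matrix.diagonal dvec := by
      ext r i
      rw [Matrix.of_apply, if_pos hmn]
      exact hdiag r i
    have hsq : Matrix.diagonal dvec * Matrix.diagonal dvec = (1 : Matrix (Fin n) (Fin n) ℤ) := by
      rw [Matrix.diagonal_mul_diagonal]
      have : (fun i => dvec i * dvec i) = fun _ : Fin n => (1 : ℤ) := by
        funext i
        by_cases h : (i : ℕ) < n - m <;> simp [hdv, h]
      rw [this, Matrix.diagonal_one]
    rw [hC, hG, Matrix.diagonal_transpose, hsq]
    exact ⟨rfl, rfl⟩
  · -- large m
    have h1 : (Matrix.of fun r i : Fin n => Nseq hn (-Bᵀ) m (Sum.inr r) i)ᵀ *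
        (Matrix.of fun r i : Fin n =>
          if m ≤ n then
            (if (i : ℕ) + 1 ≤ n - m then (Pi.single i (1 : ℤ) : Fin n → ℤ) r
             else -(Pi.single i (1 : ℤ) : Fin n → ℤ) r)
          else -Sseq' hn (cartanCompanion B) (m - n) (Pi.single i (1 : ℤ)) r) = 1 := by
      ext i j
      rw [Matrix.mul_apply]
      have hterm : ∀ r : Fin n,
          (Matrix.of fun r i : Fin n => Nseq hn (-Bᵀ) m (Sum.inr r) i)ᵀ i r *
            (Matrix.of fun r i : Fin n =>
              if m ≤ n then
                (if (i : ℕ) + 1 ≤ n - m then (Pi.single i (1 : ℤ) : Fin n → ℤ) r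
                 else -(Pi.single i (1 : ℤ) : Fin n → ℤ) r)
              else -Sseq' hn (cartanCompanion B) (m - n) (Pi.single i (1 : ℤ)) r) r j
          = Rseq' hn (cartanCompanion B)ᵀ (m - n) (Pi.single i (1 : ℤ)) r *
              Sseq' hn (cartanCompanion B) (m - n) (Pi.single j (1 : ℤ)) r := by
        intro r
        rw [Matrix.transpose_apply, Matrix.of_apply, Matrix.of_apply, (hmain m).2 r i,
          if_neg hmn]
        unfold Stmt11.Cfun
        rw [if_neg (by omega)]
        ring
      rw [Finset.sum_congr rfl fun r _ => hterm r,
        Stmt11.pair_seq hn (cartanCompanion B) hAdiag (m - n) (Pi.single i (1 : ℤ))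
          (Pi.single j (1 : ℤ)),
        Stmt11.sum_mul_single (Pi.single i (1 : ℤ) : Fin n → ℤ) j, Matrix.one_apply,
        Pi.single_apply]
      by_cases hij : i = j
      · rw [if_pos hij.symm, if_pos hij]
      · rw [if_neg (fun hc => hij hc.symm), if_neg hij]
    exact ⟨h1, mul_eq_one_comm.mp h1⟩
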